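/- Let G be a group, d ≥ 1, and let D : G → Matrix (Fin d) (Fin d) ℂ be a projective unitary representation: each D g is unitary and there is ω : G → G → ℂˣ such that D g * D h = (ω g h : ℂ) • D (g*h) for all g, h. Assume ω is not a coboundary, i.e. there is NO θ : G → ℂˣ with (ω g h : ℂ) = (θ g : ℂ) * (θ h : ℂ) * ((θ (g*h))⁻¹ : ℂ) for all g, h. Let N ≥ 1, let A : Fin d → Matrix (Fin N) (Fin N) ℂ, and let V : G → Matrix (Fin N) (Fin N) ℂ with each V g unitary, satisfying the symmetry condition: for all g ∈ G and all m : Fin d, ∑ n, (D g) m n • A n = (V g)ᴴ * A m * (V g). Then for every I ≥ 1 the map Γ_I is not injective; in particular the MPS built from A is not injective at any length (generalized LSM theorem: a projectively realized on-site symmetry together with translation invariance forbids an injective, i.e. unique gapped, matrix product ground state). -/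

import Mathlib

open Matrix

/-- The MPS map `Γ_I`: given an MPS tensor `A`, length `I` and a boundary matrix `M`,
returns the coefficient function `σ ↦ trace (M * A (σ 0) * ⋯ * A (σ (I-1)))`. -/
noncomputable def GammaMPS {N : ℕ} {ι : Type*} (A : ι → Matrix (Fin N) (Fin N) ℂ)
    (I : ℕ) (M : Matrix (Fin N) (Fin N) ℂ) : (Fin I → ι) → ℂ :=
  fun σ => Matrix.trace (M * (List.ofFn fun i => A (σ i)).prod)

/-- Generalized LSM theorem: a projectively realized on-site symmetry (whose factor
system is not a coboundary) together with translation invariance forbids an injective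
matrix product ground state at any length. -/
lemma prod_comm_aux {N : ℕ} (U : Matrix (Fin N) (Fin N) ℂ) (c : ℂ) :
    ∀ (l : List (Matrix (Fin N) (Fin N) ℂ)), (∀ B ∈ l, B * U = c • (U * B)) →
    l.prod * U = c ^ l.length • (U * l.prod)
  | [], _ => by simp
  | B :: l, h => by
    have hB := h B List.mem_cons_self
    have hl := prod_comm_aux U c l (fun C hC => h C (List.mem_cons_of_mem _ hC))
    simp only [List.prod_cons, List.length_cons]
    rw [mul_assoc, hl, Matrix.mul_smul, ← mul_assoc, hB, Matrix.smul_mul,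
      smul_smul, pow_succ, mul_comm (c ^ l.length) c, mul_assoc]

theorem generalized_LSM {G : Type*} [Group G] {d : ℕ} (hd : 1 ≤ d)
    (D : G → Matrix (Fin d) (Fin d) ℂ)
    (hDunitary : ∀ g, D g ∈ Matrix.unitaryGroup (Fin d) ℂ)
    (ω : G → G → ℂˣ)
    (hproj : ∀ g h, D g * D h = (ω g h : ℂ) • D (g * h))
    (hnotcob : ¬ ∃ θ : G → ℂˣ, ∀ g h,
      (ω g h : ℂ) = (θ g : ℂ) * (θ h : ℂ) * (((θ (g * h))⁻¹ : ℂˣ) : ℂ))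
    {N : ℕ} (hN : 1 ≤ N)
    (A : Fin d → Matrix (Fin N) (Fin N) ℂ)
    (V : G → Matrix (Fin N) (Fin N) ℂ)
    (hVunitary : ∀ g, V g ∈ Matrix.unitaryGroup (Fin N) ℂ)
    (hsym : ∀ (g : G) (m : Fin d), ∑ n, (D g) m n • A n = (V g)ᴴ * A m * V g) :
    ∀ I, 1 ≤ I → ¬ Function.Injective (GammaMPS A I) := by
  intro I hI hinj
  have hVl : ∀ g, (V g)ᴴ * V g = 1 := fun g => by
    have := (hVunitary g).1; rwa [Matrix.star_eq_conjTranspose] at this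
  have hVr : ∀ g, V g * (V g)ᴴ = 1 := fun g => by
    have := (hVunitary g).2; rwa [Matrix.star_eq_conjTranspose] at this
  -- key scaled-conjugation relation
  have hfinal : ∀ g h : G, ∀ m, A m = (ω g h : ℂ) • A m := by
    intro g h
    set c : ℂ := (ω g h : ℂ) with hcdef
    set U : Matrix (Fin N) (Fin N) ℂ := (V g * V h) * (V (g*h))ᴴ with hUdef
    have hUr : U * Uᴴ = 1 := by
      rw [hUdef, Matrix.conjTranspose_mul, Matrix.conjTranspose_conjTranspose,
        Matrix.conjTranspose_mul]
      calc (V g * V h) * (V (g*h))ᴴ * (V (g*h) * ((V h)ᴴ * (V g)ᴴ))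
          = V g * (V h * (((V (g*h))ᴴ * V (g*h)) * (V h)ᴴ)) * (V g)ᴴ := by
            simp only [mul_assoc]
        _ = 1 := by rw [hVl, one_mul, hVr, mul_one, hVr]
    have hUl : Uᴴ * U = 1 := by
      rw [hUdef, Matrix.conjTranspose_mul, Matrix.conjTranspose_mul]
      calc (V (g*h))ᴴᴴ * ((V h)ᴴ * (V g)ᴴ) * (V g * V h * (V (g*h))ᴴ)
          = V (g*h) * ((V h)ᴴ * (((V g)ᴴ * V g) * V h)) * (V (g*h))ᴴ := by
            rw [Matrix.conjTranspose_conjTranspose]; simp only [mul_assoc]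
        _ = 1 := by rw [hVl, one_mul, hVl, mul_one, hVr]
    -- the key equation E
    have hE : ∀ m, c • ((V (g*h))ᴴ * A m * V (g*h))
        = (V h)ᴴ * ((V g)ᴴ * A m * V g) * V h := by
      intro m
      have h1 : ∑ n, ((D g * D h) m n) • A n = c • ((V (g*h))ᴴ * A m * V (g*h)) := by
        have he : ∀ n, (D g * D h) m n = c * (D (g*h)) m n := by
          intro n; rw [hproj]; simp [Matrix.smul_apply, hcdef]
        simp_rw [he, mul_smul, ← Finset.smul_sum, hsym]
      have h2 : ∑ n, ((D g * D h) m n) • A n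
          = (V h)ᴴ * ((V g)ᴴ * A m * V g) * V h := by
        have he : ∀ n, (D g * D h) m n = ∑ k, D g m k * D h k n := fun n =>
          Matrix.mul_apply
        simp_rw [he, Finset.sum_smul, mul_smul]
        rw [Finset.sum_comm]
        have hpull : ∀ (a : ℂ) (X : Matrix (Fin N) (Fin N) ℂ),
            a • ((V h)ᴴ * X * V h) = (V h)ᴴ * (a • X) * V h := by
          intro a X; rw [Matrix.mul_smul, Matrix.smul_mul]
        simp_rw [← Finset.smul_sum, hsym, hpull, ← Matrix.sum_mul, ← Matrix.mul_sum,
          hsym g m]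
      rw [← h1, h2]
    -- commutation relation
    have hcomm : ∀ m, A m * U = c • (U * A m) := by
      intro m
      have hkey := congrArg (fun M => (V g * V h) * M * (V (g*h))ᴴ) (hE m)
      simp only [Matrix.mul_smul, Matrix.smul_mul] at hkey
      have e1 : V g * V h * ((V h)ᴴ * ((V g)ᴴ * A m * V g) * V h) * (V (g*h))ᴴ
          = A m * U := by
        rw [hUdef]
        calc V g * V h * ((V h)ᴴ * ((V g)ᴴ * A m * V g) * V h) * (V (g*h))ᴴ
            = V g * ((V h * (V h)ᴴ) * ((V g)ᴴ * (A m * (V g * (V h * (V (g*h))ᴴ))))) := by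
              simp only [mul_assoc]
          _ = V g * ((V g)ᴴ * (A m * (V g * (V h * (V (g*h))ᴴ)))) := by
              rw [hVr, one_mul]
          _ = (V g * (V g)ᴴ) * (A m * (V g * (V h * (V (g*h))ᴴ))) := by
              simp only [mul_assoc]
          _ = A m * (V g * V h * (V (g*h))ᴴ) := by
              rw [hVr, one_mul]; simp only [mul_assoc]
      have e2 : V g * V h * ((V (g*h))ᴴ * A m * V (g*h)) * (V (g*h))ᴴ
          = U * A m := by
        rw [hUdef]
        calc V g * V h * ((V (g*h))ᴴ * A m * V (g*h)) * (V (g*h))ᴴ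
            = V g * (V h * ((V (g*h))ᴴ * (A m * (V (g*h) * (V (g*h))ᴴ)))) := by
              simp only [mul_assoc]
          _ = V g * (V h * ((V (g*h))ᴴ * A m)) := by rw [hVr, mul_one]
          _ = V g * V h * (V (g*h))ᴴ * A m := by simp only [mul_assoc]
      rw [← e1, ← hkey, e2]
    -- product commutation
    have hX : ∀ σ : Fin I → Fin d, Uᴴ * (List.ofFn fun i => A (σ i)).prod * U
        = c ^ I • (List.ofFn fun i => A (σ i)).prod := by
      intro σ
      have hp := prod_comm_aux U c (List.ofFn fun i => A (σ i)) (by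
        intro B hB
        obtain ⟨i, rfl⟩ := List.mem_ofFn.mp hB
        exact hcomm (σ i))
      rw [List.length_ofFn] at hp
      rw [mul_assoc, hp, Matrix.mul_smul, ← mul_assoc, hUl, one_mul]
    -- conjugation of every M
    have hMU : ∀ M : Matrix (Fin N) (Fin N) ℂ, U * M * Uᴴ = c ^ I • M := by
      intro M
      apply hinj
      funext σ
      show Matrix.trace (U * M * Uᴴ * _) = Matrix.trace ((c ^ I • M) * _)
      rw [Matrix.smul_mul, Matrix.trace_smul]
      rw [mul_assoc, mul_assoc, Matrix.trace_mul_comm, mul_assoc, hX σ,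
        Matrix.mul_smul, Matrix.trace_smul]
    have hcI : c ^ I = 1 := by
      have h1 := hMU 1
      rw [mul_one, hUr] at h1
      have := congrFun (congrFun h1 ⟨0, hN⟩) ⟨0, hN⟩
      simpa using this.symm
    intro m
    have h2 := hMU (A m)
    rw [hcI, one_smul] at h2
    have h3 := hcomm m
    calc A m = A m * (U * Uᴴ) := by rw [hUr, mul_one]
      _ = c • (U * A m * Uᴴ) := by rw [← mul_assoc, h3, Matrix.smul_mul]
      _ = c • A m := by rw [h2]
  by_cases hA : ∀ m, A m = 0
  · have h10 : GammaMPS A I (1 : Matrix (Fin N) (Fin N) ℂ) = GammaMPS A I 0 := by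
      funext σ
      show Matrix.trace (1 * _) = Matrix.trace (0 * _)
      obtain ⟨I', rfl⟩ : ∃ I', I = I' + 1 := ⟨I - 1, (Nat.succ_pred_eq_of_pos hI).symm⟩
      rw [List.ofFn_succ, List.prod_cons, hA, Matrix.zero_mul, Matrix.mul_zero,
        Matrix.mul_zero]
    have h1 := hinj h10
    have := congrFun (congrFun h1 ⟨0, hN⟩) ⟨0, hN⟩
    simpa using this
  · push_neg at hA
    obtain ⟨m₀, hm₀⟩ := hA
    apply hnotcob
    refine ⟨fun _ => 1, fun g h => ?_⟩
    have hx : ∃ i j, A m₀ i j ≠ 0 := by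
      by_contra hc
      push_neg at hc
      exact hm₀ (by ext i j; simpa using hc i j)
    obtain ⟨i, j, hij⟩ := hx
    have := congrFun (congrFun (hfinal g h m₀) i) j
    simp only [Matrix.smul_apply, smul_eq_mul] at this
    have hc1 : (ω g h : ℂ) = 1 := by
      have h' : ((ω g h : ℂ) - 1) * A m₀ i j = 0 := by
        rw [sub_mul, one_mul, ← this, sub_self]
      rcases mul_eq_zero.mp h' with h'' | h''
      · exact sub_eq_zero.mp h''
      · exact absurd h'' hij
    simp [hc1]
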